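/- Let m, n ≥ 1 and let Y ∈ S_{m,n}, with Y_{m1} denoting the bottom block of its first block column. Then dim_ℂ ker(Y) = n − rank(Y_{m1}). In particular, ker(Y) has dimension n if and only if Y_{m1} = 0. -/

import Mathlib

open Matrix

/-- Membership in the slice S_{m,n}: as an m×m array of n×n blocks, Y has
identity blocks in positions (i, i+1), arbitrary blocks in the first block
column subject to trace(Y₁₁) = 0, and zero blocks elsewhere. -/
def InSlice (m n : ℕ) (Y : Matrix (Fin m × Fin n) (Fin m × Fin n) ℂ) : Prop :=
  (∀ (i j : Fin m) (a b : Fin n), (j : ℕ) = (i : ℕ) + 1 →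
      Y (i, a) (j, b) = if a = b then 1 else 0) ∧
  (∀ (i j : Fin m) (a b : Fin n), (j : ℕ) ≠ 0 → (j : ℕ) ≠ (i : ℕ) + 1 →
      Y (i, a) (j, b) = 0) ∧
  (∀ i : Fin m, (i : ℕ) = 0 → ∑ a : Fin n, Y (i, a) (i, a) = 0)

set_option maxHeartbeats 1000000 in
/-- For Y ∈ S_{m,n}, dim ker(Y) = n − rank(Y_{m1}); in particular ker(Y) has
dimension n iff the bottom block Y_{m1} of the first block column vanishes. -/
theorem slice_kernel_dim (m n : ℕ) (hm : 0 < m) (hn : 0 < n)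
    (Y : Matrix (Fin m × Fin n) (Fin m × Fin n) ℂ) (hY : InSlice m n Y) :
    Module.finrank ℂ (LinearMap.ker Y.mulVecLin) =
        n - (Matrix.of fun a b : Fin n =>
          Y (⟨m - 1, by omega⟩, a) (⟨0, hm⟩, b)).rank ∧
      (Module.finrank ℂ (LinearMap.ker Y.mulVecLin) = n ↔
        (Matrix.of fun a b : Fin n =>
          Y (⟨m - 1, by omega⟩, a) (⟨0, hm⟩, b)) = 0) := by
  obtain ⟨h1, h2, _h3⟩ := hY
  set i0 : Fin m := ⟨0, hm⟩ with hi0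
  set im : Fin m := ⟨m - 1, by omega⟩ with him
  set B : Matrix (Fin n) (Fin n) ℂ :=
    Matrix.of (fun a b : Fin n => Y (im, a) (i0, b)) with hBdef
  -- key mulVec formula
  have key : ∀ (x : Fin m × Fin n → ℂ) (i : Fin m) (a : Fin n),
      Y.mulVec x (i, a) = (∑ b, Y (i, a) (i0, b) * x (i0, b)) +
        (if h : (i : ℕ) + 1 < m then x (⟨(i : ℕ) + 1, h⟩, a) else 0) := by
    intro x i a
    have expand : Y.mulVec x (i, a) =
        ∑ j : Fin m, ∑ b : Fin n, Y (i, a) (j, b) * x (j, b) := by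
      rw [Matrix.mulVec, dotProduct]
      exact Fintype.sum_prod_type (f := fun p : Fin m × Fin n => Y (i, a) p * x p)
    rw [expand]
    set g : Fin m → ℂ := fun j => ∑ b : Fin n, Y (i, a) (j, b) * x (j, b) with hg
    by_cases h : (i : ℕ) + 1 < m
    · set j1 : Fin m := ⟨(i : ℕ) + 1, h⟩ with hj1
      have hne : i0 ≠ j1 := by
        intro hc
        have := congrArg (Fin.val) hc
        simp [hi0, hj1] at this
      have hzero : ∀ j ∈ (Finset.univ : Finset (Fin m)), j ∉ ({i0, j1} : Finset (Fin m)) →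
          g j = 0 := by
        intro j _ hj
        simp only [Finset.mem_insert, Finset.mem_singleton] at hj
        push_neg at hj
        obtain ⟨hj0, hjj1⟩ := hj
        have hjv0 : (j : ℕ) ≠ 0 := fun hc => hj0 (Fin.ext (by simp [hi0, hc]))
        have hjv1 : (j : ℕ) ≠ (i : ℕ) + 1 := fun hc => hjj1 (Fin.ext (by simp [hj1, hc]))
        simp [hg, h2 i j a _ hjv0 hjv1]
      have hsub : ∑ j : Fin m, g j = ∑ j ∈ ({i0, j1} : Finset (Fin m)), g j :=
        (Finset.sum_subset (Finset.subset_univ _) hzero).symm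
      rw [hsub, Finset.sum_pair hne, dif_pos h]
      congr 1
      have hgj1 : g j1 = ∑ b : Fin n, (if a = b then (1:ℂ) else 0) * x (j1, b) := by
        simp only [hg]
        refine Finset.sum_congr rfl fun b _ => ?_
        rw [h1 i j1 a b rfl]
      rw [hgj1]
      simp [hj1]
    · rw [Finset.sum_eq_single i0, dif_neg h, add_zero]
      · intro j _ hj0
        have hjv0 : (j : ℕ) ≠ 0 := fun hc => hj0 (Fin.ext (by simp [hi0, hc]))
        have hjv1 : (j : ℕ) ≠ (i : ℕ) + 1 := by omega
        simp [hg, h2 i j a _ hjv0 hjv1]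
      · intro hc; exact absurd (Finset.mem_univ i0) hc
  have him1 : ¬ ((im : ℕ) + 1 < m) := by simp only [him]; simp; omega
  -- the backward map as a plain function with evaluation lemmas
  set F : (Fin n → ℂ) → (Fin m × Fin n → ℂ) := fun v p =>
    if h : (p.1 : ℕ) = 0 then v p.2
    else -(∑ c, Y (⟨(p.1 : ℕ) - 1, by omega⟩, p.2) (i0, c) * v c) with hFdef
  have hF0 : ∀ (v : Fin n → ℂ) (b : Fin n), F v (i0, b) = v b := fun v b => dif_pos rfl
  have hFs : ∀ (v : Fin n → ℂ) (j : Fin m) (_ : (j : ℕ) ≠ 0) (b : Fin n),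
      F v (j, b) = -(∑ c, Y (⟨(j : ℕ) - 1, by omega⟩, b) (i0, c) * v c) := by
    intro v j hj b
    exact dif_neg hj
  -- the linear equivalence between kernels
  have e : (LinearMap.ker Y.mulVecLin) ≃ₗ[ℂ] (LinearMap.ker B.mulVecLin) := by
    refine
      { toFun := fun x => ⟨fun a => x.1 (i0, a), ?_⟩
        map_add' := fun x y => rfl
        map_smul' := fun c x => rfl
        invFun := fun v => ⟨F v.1, ?_⟩
        left_inv := ?_
        right_inv := ?_ }
    · -- forward membership
      obtain ⟨x, hx⟩ := x
      rw [LinearMap.mem_ker] at hx ⊢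
      funext a
      have h0 : Y.mulVec x (im, a) = 0 := by
        rw [← Matrix.mulVecLin_apply, hx]; rfl
      rw [key x im a, dif_neg him1] at h0
      simpa [Matrix.mulVecLin_apply, Matrix.mulVec, dotProduct, hBdef] using h0
    · -- backward membership
      obtain ⟨v, hv⟩ := v
      rw [LinearMap.mem_ker] at hv ⊢
      have hv' : ∀ a, ∑ c, Y (im, a) (i0, c) * v c = 0 := by
        intro a
        have := congrFun hv a
        simpa [Matrix.mulVecLin_apply, Matrix.mulVec, dotProduct, hBdef] using this
      funext p
      obtain ⟨i, a⟩ := p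
      rw [Matrix.mulVecLin_apply, key]
      simp only [hF0]
      by_cases h : (i : ℕ) + 1 < m
      · rw [dif_pos h, hFs v ⟨(i : ℕ) + 1, h⟩ (by simp) a]
        have hi : (⟨((⟨(i : ℕ) + 1, h⟩ : Fin m) : ℕ) - 1, by omega⟩ : Fin m) = i :=
          Fin.ext (by simp)
        rw [hi]
        simp
      · rw [dif_neg h, add_zero]
        have hieq : i = im := Fin.ext (by simp [him]; omega)
        rw [hieq]
        exact hv' a
    · -- left inverse
      rintro ⟨x, hx⟩
      rw [LinearMap.mem_ker] at hx
      apply Subtype.ext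
      funext p
      obtain ⟨i, a⟩ := p
      show F (fun b => x (i0, b)) (i, a) = x (i, a)
      have hz : Y.mulVec x = 0 := by rw [← Matrix.mulVecLin_apply]; exact hx
      by_cases h : (i : ℕ) = 0
      · have hii : i = i0 := Fin.ext (by simpa [hi0] using h)
        rw [hii]
        exact hF0 (fun b => x (i0, b)) a
      · refine (hFs (fun b => x (i0, b)) i h a).trans ?_
        have h0 := key x ⟨(i : ℕ) - 1, by omega⟩ a
        rw [hz] at h0
        simp only [Fin.val_mk, Pi.zero_apply] at h0
        rw [dif_pos (by omega : (i : ℕ) - 1 + 1 < m)] at h0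
        have hieq : (⟨(i : ℕ) - 1 + 1, by omega⟩ : Fin m) = i := Fin.ext (by simp; omega)
        rw [hieq] at h0
        linear_combination h0
    · -- right inverse
      rintro ⟨v, hv⟩
      apply Subtype.ext
      funext b
      exact hF0 v b
  -- conclude via rank-nullity
  have hrn : B.rank + Module.finrank ℂ (LinearMap.ker B.mulVecLin) = n := by
    have := LinearMap.finrank_range_add_finrank_ker B.mulVecLin
    rwa [Module.finrank_fintype_fun_eq_card, Fintype.card_fin] at this
  have hfr : Module.finrank ℂ (LinearMap.ker Y.mulVecLin) =
      Module.finrank ℂ (LinearMap.ker B.mulVecLin) := e.finrank_eq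
  have hrank_le : B.rank ≤ n := by
    simpa using Matrix.rank_le_card_width B
  have hmain : Module.finrank ℂ (LinearMap.ker Y.mulVecLin) = n - B.rank := by
    omega
  refine ⟨hmain, ?_⟩
  rw [hmain]
  constructor
  · intro h
    have hr0 : B.rank = 0 := by omega
    have hker : LinearMap.range B.mulVecLin = ⊥ := by
      rw [Matrix.rank] at hr0
      exact Submodule.finrank_eq_zero.mp hr0
    rw [LinearMap.range_eq_bot] at hker
    ext a b
    have := congrFun (LinearMap.congr_fun hker (Pi.single b 1)) a
    simpa [Matrix.mulVecLin_apply, Matrix.mulVec_single] using this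
  · intro h
    have : B.rank = 0 := by rw [h]; simp [Matrix.rank]
    omega
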